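/- Let c: [0,b] → [0,∞) be continuous, g(x) = exp(−2∫_0^x c(y)dy), a = 2∫_0^b g(x)dx, and let h: [0,b] → ℝ be C¹ with h(0) = 0, h(b) = −1 and satisfying −c(x)h(x) + (1/2)h'(x) = c(x) − 1/a for x ∈ (0,b). Then h(x) > −1 for all x ∈ (0,b), h'(x) ≥ −2/a, and c(x) = (h'(x) + 2/a)/(2(1+h(x))). -/

import Mathlib

open MeasureTheory intervalIntegral Set

theorem stmt_9 (b a : ℝ) (c g h h' : ℝ → ℝ) (hb : 0 < b)
    (hc_cont : ContinuousOn c (Set.Icc 0 b))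
    (hc_nonneg : ∀ x ∈ Set.Icc (0:ℝ) b, 0 ≤ c x)
    (hg : ∀ x, g x = Real.exp (-2 * ∫ y in (0:ℝ)..x, c y))
    (ha : a = 2 * ∫ x in (0:ℝ)..b, g x)
    (hderiv : ∀ x ∈ Set.Icc (0:ℝ) b, HasDerivAt h (h' x) x)
    (hh'cont : ContinuousOn h' (Set.Icc 0 b))
    (h0 : h 0 = 0) (hhb : h b = -1)
    (hode : ∀ x ∈ Set.Ioo (0:ℝ) b, -(c x) * h x + (1/2) * h' x = c x - 1/a) :
    ∀ x ∈ Set.Ioo (0:ℝ) b,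
      -1 < h x ∧ -(2/a) ≤ h' x ∧ c x = (h' x + 2/a) / (2 * (1 + h x)) := by
  have hb0 : (0:ℝ) ≤ b := hb.le
  set F : ℝ → ℝ := fun x => ∫ y in (0:ℝ)..x, c y with hFdef
  set G : ℝ → ℝ := fun x => ∫ y in (0:ℝ)..x, g y with hGdef
  -- integrability of c
  have hcI : IntervalIntegrable c volume 0 b := by
    apply ContinuousOn.intervalIntegrable
    rwa [Set.uIcc_of_le hb0]
  -- continuity of F on Icc
  have hFc : ContinuousOn F (Set.Icc 0 b) := by
    have := continuousOn_primitive_interval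
      (f := c) (μ := volume) (a := (0:ℝ)) (b := b) (by
        rw [Set.uIcc_of_le hb0]; exact hc_cont.integrableOn_Icc)
    rwa [Set.uIcc_of_le hb0] at this
  -- continuity of g on Icc
  have hgc : ContinuousOn g (Set.Icc 0 b) := by
    have : g = fun x => Real.exp (-2 * F x) := funext hg
    rw [this]
    exact Real.continuous_exp.comp_continuousOn (continuousOn_const.mul hFc)
  have hgpos : ∀ x, 0 < g x := fun x => by rw [hg x]; exact Real.exp_pos _
  have hgI : IntervalIntegrable g volume 0 b := by
    apply ContinuousOn.intervalIntegrable
    rwa [Set.uIcc_of_le hb0]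
  have haI : 0 < ∫ x in (0:ℝ)..b, g x :=
    intervalIntegral_pos_of_pos_on hgI (fun x _ => hgpos x) hb
  have hapos : 0 < a := by rw [ha]; linarith
  have hane : a ≠ 0 := ne_of_gt hapos
  -- continuity of G on Icc
  have hGc : ContinuousOn G (Set.Icc 0 b) := by
    have := continuousOn_primitive_interval
      (f := g) (μ := volume) (a := (0:ℝ)) (b := b) (by
        rw [Set.uIcc_of_le hb0]; exact hgc.integrableOn_Icc)
    rwa [Set.uIcc_of_le hb0] at this
  -- continuity of h on Icc
  have hhc : ContinuousOn h (Set.Icc 0 b) := fun x hx =>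
    (hderiv x hx).continuousAt.continuousWithinAt
  -- the auxiliary function
  set φ : ℝ → ℝ := fun x => (1 + h x) * Real.exp (-2 * F x) + (2/a) * G x with hφdef
  have hφc : ContinuousOn φ (Set.Icc 0 b) := by
    apply ContinuousOn.add
    · exact (continuousOn_const.add hhc).mul
        (Real.continuous_exp.comp_continuousOn (continuousOn_const.mul hFc))
    · exact continuousOn_const.mul hGc
  -- derivative of φ is 0 on Ioo
  have hφd : ∀ x ∈ Set.Ioo (0:ℝ) b, HasDerivAt φ 0 x := by
    intro x hx
    have hxIcc : x ∈ Set.Icc (0:ℝ) b := ⟨hx.1.le, hx.2.le⟩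
    have hmem : Set.Icc (0:ℝ) b ∈ nhds x := Icc_mem_nhds hx.1 hx.2
    have hcx : ContinuousAt c x := (hc_cont x hxIcc).continuousAt hmem
    have hgx : ContinuousAt g x := (hgc x hxIcc).continuousAt hmem
    have hcmeas : StronglyMeasurableAtFilter c (nhds x) volume :=
      (hc_cont.mono Set.Ioo_subset_Icc_self).stronglyMeasurableAtFilter isOpen_Ioo x hx
    have hgmeas : StronglyMeasurableAtFilter g (nhds x) volume :=
      (hgc.mono Set.Ioo_subset_Icc_self).stronglyMeasurableAtFilter isOpen_Ioo x hx
    have hcIx : IntervalIntegrable c volume 0 x := by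
      apply hcI.mono_set
      rw [Set.uIcc_of_le hx.1.le, Set.uIcc_of_le hb0]
      exact Set.Icc_subset_Icc le_rfl hx.2.le
    have hgIx : IntervalIntegrable g volume 0 x := by
      apply hgI.mono_set
      rw [Set.uIcc_of_le hx.1.le, Set.uIcc_of_le hb0]
      exact Set.Icc_subset_Icc le_rfl hx.2.le
    have hFd : HasDerivAt F (c x) x :=
      intervalIntegral.integral_hasDerivAt_right hcIx hcmeas hcx
    have hGd : HasDerivAt G (g x) x :=
      intervalIntegral.integral_hasDerivAt_right hgIx hgmeas hgx
    have hhd : HasDerivAt h (h' x) x := hderiv x hxIcc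
    have hE : HasDerivAt (fun y => Real.exp (-2 * F y))
        (Real.exp (-2 * F x) * (-2 * c x)) x := (hFd.const_mul (-2)).exp
    have h1 : HasDerivAt (fun y => (1 + h y) * Real.exp (-2 * F y))
        (h' x * Real.exp (-2 * F x) + (1 + h x) * (Real.exp (-2 * F x) * (-2 * c x))) x := by
      have := ((hasDerivAt_const x (1:ℝ)).add hhd).mul hE
      exact this.congr_deriv (by simp only [Pi.add_apply]; ring)
    have h2 : HasDerivAt φ
        (h' x * Real.exp (-2 * F x) + (1 + h x) * (Real.exp (-2 * F x) * (-2 * c x))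
          + (2/a) * g x) x := h1.add (hGd.const_mul (2/a))
    have hEg : Real.exp (-2 * F x) = g x := (hg x).symm
    have hodex := hode x hx
    have hkey : h' x * Real.exp (-2 * F x) + (1 + h x) * (Real.exp (-2 * F x) * (-2 * c x))
        + (2/a) * g x = 0 := by
      rw [hEg]
      have hhx : h' x = 2 * c x * (1 + h x) - 2/a := by
        field_simp at hodex ⊢
        linarith
      rw [hhx]; ring
    rwa [hkey] at h2
  -- φ is constant on Icc
  have hint : interior (Set.Icc (0:ℝ) b) = Set.Ioo 0 b := interior_Icc
  have hdiff : DifferentiableOn ℝ φ (interior (Set.Icc (0:ℝ) b)) := by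
    rw [hint]; exact fun x hx => ((hφd x hx).differentiableAt).differentiableWithinAt
  have hd0 : ∀ x ∈ interior (Set.Icc (0:ℝ) b), deriv φ x = 0 := by
    rw [hint]; exact fun x hx => (hφd x hx).deriv
  have hmono : MonotoneOn φ (Set.Icc 0 b) :=
    monotoneOn_of_deriv_nonneg (convex_Icc 0 b) hφc hdiff (fun x hx => (hd0 x hx).ge)
  have hanti : AntitoneOn φ (Set.Icc 0 b) :=
    antitoneOn_of_deriv_nonpos (convex_Icc 0 b) hφc hdiff (fun x hx => (hd0 x hx).le)
  have hφ0 : φ 0 = 1 := by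
    simp [hφdef, h0, hFdef, hGdef, intervalIntegral.integral_same]
  have hφconst : ∀ x ∈ Set.Icc (0:ℝ) b, φ x = 1 := by
    intro x hx
    have h0I : (0:ℝ) ∈ Set.Icc (0:ℝ) b := ⟨le_rfl, hb0⟩
    have := hmono h0I hx hx.1
    have := hanti h0I hx hx.1
    rw [← hφ0]; linarith
  -- main argument
  intro x hx
  have hxIcc : x ∈ Set.Icc (0:ℝ) b := ⟨hx.1.le, hx.2.le⟩
  have hφx := hφconst x hxIcc
  have hEg : Real.exp (-2 * F x) = g x := (hg x).symm
  have hkey : (1 + h x) * g x = 1 - (2/a) * G x := by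
    rw [← hEg]
    simp only [hφdef] at hφx
    linarith
  -- G x < a / 2
  have hsplit : G x + ∫ y in x..b, g y = ∫ y in (0:ℝ)..b, g y := by
    apply intervalIntegral.integral_add_adjacent_intervals
    · apply hgI.mono_set
      rw [Set.uIcc_of_le hx.1.le, Set.uIcc_of_le hb0]
      exact Set.Icc_subset_Icc le_rfl hx.2.le
    · apply hgI.mono_set
      rw [Set.uIcc_of_le hx.2.le, Set.uIcc_of_le hb0]
      exact Set.Icc_subset_Icc hx.1.le le_rfl
  have htail : 0 < ∫ y in x..b, g y := by
    apply intervalIntegral_pos_of_pos_on _ (fun y _ => hgpos y) hx.2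
    apply hgI.mono_set
    rw [Set.uIcc_of_le hx.2.le, Set.uIcc_of_le hb0]
    exact Set.Icc_subset_Icc hx.1.le le_rfl
  have hGlt : G x < a / 2 := by
    rw [ha]; linarith
  have hpos : 0 < 1 - (2/a) * G x := by
    have : (2/a) * G x < (2/a) * (a/2) := by
      apply mul_lt_mul_of_pos_left hGlt
      positivity
    rw [div_mul_div_comm] at this
    rw [mul_comm 2 a] at this
    rw [div_self (by positivity : a * 2 ≠ 0)] at this
    linarith
  have h1h : 0 < 1 + h x := by
    have hgx := hgpos x
    nlinarith [hkey]
  have hhx : h' x = 2 * c x * (1 + h x) - 2/a := by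
    have hodex := hode x hx
    field_simp at hodex ⊢
    linarith
  refine ⟨by linarith, ?_, ?_⟩
  · have hc0 : 0 ≤ c x := hc_nonneg x hxIcc
    nlinarith
  · rw [hhx]
    field_simp
    ring
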